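/- For any positive polynomial p, there exists N such that for all n ≥ N and for any quantum operation (CPTP map) Φ and any POVM {E_m} on the output space, the total variation distance between the outcome distributions on inputs ρ⁰_odd and ρ¹_odd is less than 1/p(n). In particular any distinguishing probability difference |Pr[C_n(ρ⁰_odd)=1] − Pr[C_n(ρ¹_odd)=1]| < 1/p(n). -/

import Mathlib

open Matrix Finset Filter
open scoped ComplexOrder Kronecker

/-- Trace norm `tr √(Aᴴ A)` of a complex square matrix. -/
noncomputable def traceNorm {ι : Type*} [Fintype ι] [DecidableEq ι] (A : Matrix ι ι ℂ) : ℝ :=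
  ((((Matrix.posSemidef_conjTranspose_mul_self A).1.eigenvectorUnitary : Matrix ι ι ℂ) *
      diagonal (((↑) : ℝ → ℂ) ∘ (√·) ∘ (Matrix.posSemidef_conjTranspose_mul_self A).1.eigenvalues) *
      (star (Matrix.posSemidef_conjTranspose_mul_self A).1.eigenvectorUnitary :
        Matrix ι ι ℂ)).trace).re

/-- Bitwise XOR on bit strings. -/
def xo {n : ℕ} (i k : Fin n → Bool) : Fin n → Bool := fun j => xor (i j) (k j)

/-- Hamming weight of a bit string. -/
def wt {n : ℕ} (i : Fin n → Bool) : ℕ := (Finset.univ.filter fun j => i j = true).card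

/-- The rank-one operator `|i⟩⟨j|`. -/
def ketbra {n : ℕ} (i j : Fin n → Bool) : Matrix (Fin n → Bool) (Fin n → Bool) ℂ :=
  Matrix.single i j 1

/-- `ρ⁰_{k,i} = ½(|i⟩+|i⊕k⟩)(⟨i|+⟨i⊕k|)`. -/
noncomputable def rho0 {n : ℕ} (k i : Fin n → Bool) : Matrix (Fin n → Bool) (Fin n → Bool) ℂ :=
  (1/2 : ℂ) • (ketbra i i + ketbra i (xo i k) + ketbra (xo i k) i + ketbra (xo i k) (xo i k))

/-- `ρ¹_{k,i} = ½(|i⟩-|i⊕k⟩)(⟨i|-⟨i⊕k|)`. -/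
noncomputable def rho1 {n : ℕ} (k i : Fin n → Bool) : Matrix (Fin n → Bool) (Fin n → Bool) ℂ :=
  (1/2 : ℂ) • (ketbra i i - ketbra i (xo i k) - ketbra (xo i k) i + ketbra (xo i k) (xo i k))

/-- `Ω_n`, the set of bit strings of odd Hamming weight. -/
def Omega (n : ℕ) : Finset (Fin n → Bool) := Finset.univ.filter fun k => Odd (wt k)
/-- The averaged state `ρᵇ_odd`. -/
noncomputable def rhoOdd (n : ℕ) (b : Bool) : Matrix (Fin n → Bool) (Fin n → Bool) ℂ :=
  ((1 : ℂ) / (2 ^ (n-1) * 2 ^ n)) •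
    ∑ k ∈ Omega n, ∑ i : Fin n → Bool, (if b then rho1 k i else rho0 k i)


lemma psd_trace_nonneg {d : Type*} [Fintype d] [DecidableEq d] {M : Matrix d d ℂ}
    (h : M.PosSemidef) : 0 ≤ M.trace := by
  exact h.trace_nonneg

lemma psd_trace_mul_nonneg {d : Type*} [Fintype d] [DecidableEq d] {P Q : Matrix d d ℂ}
    (hP : P.PosSemidef) (hQ : Q.PosSemidef) : 0 ≤ (P * Q).trace := by
  open scoped MatrixOrder in
  obtain ⟨B, hB⟩ := CStarAlgebra.nonneg_iff_eq_star_mul_self.mp hP.nonneg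
  rw [hB, star_eq_conjTranspose, Matrix.mul_assoc, Matrix.trace_mul_comm]
  exact psd_trace_nonneg (hQ.mul_mul_conjTranspose_same B)

lemma psd_sum {d ι : Type*} [Fintype d] [DecidableEq d] (s : Finset ι)
    (f : ι → Matrix d d ℂ) (h : ∀ i ∈ s, (f i).PosSemidef) : (∑ i ∈ s, f i).PosSemidef := by
  induction s using Finset.cons_induction with
  | empty => simpa using Matrix.PosSemidef.zero
  | cons a s ha ih =>
      rw [Finset.sum_cons]
      exact ((h a (Finset.mem_cons_self a s)).add (ih fun i hi => h i (Finset.mem_cons_of_mem hi)))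

lemma norm_sub_le_re_add {z w : ℂ} (hz : 0 ≤ z) (hw : 0 ≤ w) : ‖z - w‖ ≤ z.re + w.re := by
  have hz' := Complex.le_def.mp hz
  have hw' := Complex.le_def.mp hw
  simp only [Complex.zero_re, Complex.zero_im] at hz' hw'
  have : z - w = ((z.re - w.re : ℝ) : ℂ) := by
    apply Complex.ext <;> simp [hz'.2.symm, hw'.2.symm]
  rw [this, Complex.norm_real]
  calc |z.re - w.re| ≤ |z.re| + |w.re| := abs_sub _ _
    _ = z.re + w.re := by rw [abs_of_nonneg (by linarith [hz'.1]), abs_of_nonneg (by linarith [hw'.1])]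

noncomputable def Amat (n : ℕ) : Matrix (Fin n → Bool) (Fin n → Bool) ℂ :=
  Matrix.of fun _ _ => 1 / 2 ^ n
noncomputable def Bmat (n : ℕ) : Matrix (Fin n → Bool) (Fin n → Bool) ℂ :=
  Matrix.of fun i j => (-1) ^ wt i * (-1) ^ wt j / 2 ^ n

lemma xo_xo {n : ℕ} (a k : Fin n → Bool) : xo a (xo a k) = k := by
  funext j; cases h1 : a j <;> cases h2 : k j <;> simp [xo, h1, h2]

lemma xo_comm {n : ℕ} (a b : Fin n → Bool) : xo a b = xo b a := by
  funext j; simp [xo, Bool.xor_comm]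

lemma xo_eq_iff {n : ℕ} (a k b : Fin n → Bool) : xo a k = b ↔ k = xo a b := by
  constructor
  · rintro rfl; rw [xo_xo]
  · rintro rfl; rw [xo_xo]

lemma wt_cast {n : ℕ} (c : Fin n → Bool) :
    (wt c : ZMod 2) = ∑ j, (if c j then 1 else 0 : ZMod 2) := by
  rw [wt, Finset.card_filter]
  push_cast
  simp

lemma wt_xo_parity {n : ℕ} (a b : Fin n → Bool) :
    Odd (wt (xo a b)) ↔ Odd (wt a + wt b) := by
  have key : ((wt (xo a b) : ZMod 2)) = ((wt a + wt b : ℕ) : ZMod 2) := by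
    push_cast
    rw [wt_cast, wt_cast, wt_cast, ← Finset.sum_add_distrib]
    apply Finset.sum_congr rfl
    intro j _
    cases h1 : a j <;> cases h2 : b j <;> simp [xo, h1, h2] <;> decide
  have := (ZMod.natCast_eq_natCast_iff _ _ _).mp key
  rw [Nat.odd_iff, Nat.odd_iff, this]

lemma delta_eq (n : ℕ) :
    rhoOdd n false - rhoOdd n true = ((1:ℂ) / 2 ^ (n-1)) • (Amat n - Bmat n) := by
  have hsub : ∀ (k i : Fin n → Bool),
      rho0 k i - rho1 k i = ketbra i (xo i k) + ketbra (xo i k) i := by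
    intro k i
    rw [rho0, rho1]
    module
  have hsum : (∑ k ∈ Omega n, ∑ i : Fin n → Bool, rho0 k i)
      - (∑ k ∈ Omega n, ∑ i : Fin n → Bool, rho1 k i)
      = ∑ k ∈ Omega n, ∑ i : Fin n → Bool, (ketbra i (xo i k) + ketbra (xo i k) i) := by
    rw [← Finset.sum_sub_distrib]
    refine Finset.sum_congr rfl fun k _ => ?_
    rw [← Finset.sum_sub_distrib]
    exact Finset.sum_congr rfl fun i _ => hsub k i
  rw [rhoOdd, rhoOdd]
  simp only [Bool.false_eq_true, eq_self_iff_true, if_false, if_true]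
  rw [← smul_sub, hsum]
  ext a b
  simp only [Matrix.smul_apply, Matrix.sub_apply, Matrix.sum_apply, Matrix.add_apply,
    Amat, Bmat, Matrix.of_apply, ketbra, Matrix.single, Matrix.of_apply, smul_eq_mul]
  have h1 : ∀ k : Fin n → Bool,
      (∑ i : Fin n → Bool, ((if i = a ∧ xo i k = b then (1:ℂ) else 0)
        + (if xo i k = a ∧ i = b then (1:ℂ) else 0)))
      = (if k = xo a b then (1:ℂ) else 0) + (if k = xo a b then (1:ℂ) else 0) := by
    intro k
    rw [Finset.sum_add_distrib]
    congr 1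
    · rw [Finset.sum_eq_single a]
      · simp [xo_eq_iff]
      · intro i _ hi; simp [hi]
      · simp
    · rw [Finset.sum_eq_single b]
      · simp [xo_eq_iff, xo_comm a b]
      · intro i _ hi
        simp only [ite_eq_right_iff, and_imp]
        intro _ h; exact absurd h hi
      · simp
  rw [Finset.sum_congr rfl (fun k _ => h1 k)]
  rw [Finset.sum_add_distrib, Finset.sum_ite_eq' (Omega n)]
  have hmem : (xo a b ∈ Omega n) ↔ Odd (wt a + wt b) := by
    rw [Omega, Finset.mem_filter]
    simp [wt_xo_parity]
  by_cases hodd : Odd (wt a + wt b)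
  · rw [if_pos (hmem.mpr hodd)]
    have : ((-1:ℂ)) ^ wt a * (-1) ^ wt b = -1 := by
      rw [← pow_add]; exact Odd.neg_one_pow hodd
    rw [this]
    have h2 : (2:ℂ) ^ n ≠ 0 := by positivity
    have h3 : (2:ℂ) ^ (n-1) ≠ 0 := by positivity
    field_simp
    ring
  · rw [if_neg (fun h => hodd (hmem.mp h))]
    have : ((-1:ℂ)) ^ wt a * (-1) ^ wt b = 1 := by
      rw [← pow_add]; exact Even.neg_one_pow (Nat.not_odd_iff_even.mp hodd)
    rw [this]
    simp

noncomputable def Xa (n : ℕ) : Matrix (Fin n → Bool) (Fin n → Bool) ℂ :=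
  Matrix.of fun _ _ => 1 / 2 ^ n
noncomputable def Xb (n : ℕ) : Matrix (Fin n → Bool) (Fin n → Bool) ℂ :=
  Matrix.of fun _ j => (-1) ^ wt j / 2 ^ n

lemma Afact (n : ℕ) : Amat n = (Xa n)ᴴ * Xa n := by
  ext i j
  simp only [Amat, Xa, Matrix.mul_apply, Matrix.conjTranspose_apply, Matrix.of_apply]
  simp only [star_div₀, star_one, star_pow, star_ofNat]
  rw [Finset.sum_const, Finset.card_univ]
  have : Fintype.card (Fin n → Bool) = 2 ^ n := by simp [Fintype.card_fun]
  rw [this, nsmul_eq_mul]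
  push_cast
  have h2 : (2:ℂ) ^ n ≠ 0 := by positivity
  field_simp

lemma Bfact (n : ℕ) : Bmat n = (Xb n)ᴴ * Xb n := by
  ext i j
  simp only [Bmat, Xb, Matrix.mul_apply, Matrix.conjTranspose_apply, Matrix.of_apply]
  simp only [star_div₀, star_pow, star_neg, star_one, star_ofNat]
  rw [Finset.sum_const, Finset.card_univ]
  have : Fintype.card (Fin n → Bool) = 2 ^ n := by simp [Fintype.card_fun]
  rw [this, nsmul_eq_mul]
  push_cast
  have h2 : (2:ℂ) ^ n ≠ 0 := by positivity
  field_simp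

lemma traceA (n : ℕ) : (Amat n).trace = 1 := by
  simp only [Matrix.trace, Matrix.diag, Amat, Matrix.of_apply]
  rw [Finset.sum_const, Finset.card_univ]
  have : Fintype.card (Fin n → Bool) = 2 ^ n := by simp [Fintype.card_fun]
  rw [this, nsmul_eq_mul]
  push_cast
  have h2 : (2:ℂ) ^ n ≠ 0 := by positivity
  field_simp

lemma traceB (n : ℕ) : (Bmat n).trace = 1 := by
  simp only [Matrix.trace, Matrix.diag, Bmat, Matrix.of_apply]
  have h1 : ∀ w : ℕ, ((-1:ℂ)) ^ w * (-1) ^ w = 1 := by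
    intro w; rw [← pow_add]; exact Even.neg_one_pow ⟨w, rfl⟩
  simp only [h1]
  rw [Finset.sum_const, Finset.card_univ]
  have : Fintype.card (Fin n → Bool) = 2 ^ n := by simp [Fintype.card_fun]
  rw [this, nsmul_eq_mul]
  push_cast
  have h2 : (2:ℂ) ^ n ≠ 0 := by positivity
  field_simp

lemma exists_N (p : Polynomial ℝ) :
    ∃ N : ℕ, ∀ n : ℕ, N ≤ n → p.eval (n : ℝ) < 2 ^ (n - 1) := by
  have hlog : 0 < Real.log 2 := Real.log_pos one_lt_two
  set q := p.comp (Polynomial.C (1 / Real.log 2) * Polynomial.X) with hq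
  have h0 : Tendsto (fun x : ℝ => Real.log 2 * x) atTop atTop :=
    Filter.Tendsto.const_mul_atTop hlog tendsto_id
  have h1 : Tendsto (fun x : ℝ => p.eval x / Real.exp (Real.log 2 * x)) atTop (nhds 0) := by
    have h2 := (q.tendsto_div_exp_atTop).comp h0
    apply Filter.Tendsto.congr _ h2
    intro x
    simp only [Function.comp, hq, Polynomial.eval_comp, Polynomial.eval_mul, Polynomial.eval_C,
      Polynomial.eval_X]
    congr 2
    field_simp
  have h3 := h1.eventually (gt_mem_nhds (show (0:ℝ) < 1/2 by norm_num))
  rw [Filter.eventually_atTop] at h3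
  obtain ⟨x₀, hx₀⟩ := h3
  refine ⟨max 1 ⌈x₀⌉₊, fun n hn => ?_⟩
  have hn1 : 1 ≤ n := le_trans (le_max_left _ _) hn
  have hxn : x₀ ≤ (n : ℝ) := by
    calc x₀ ≤ (⌈x₀⌉₊ : ℝ) := Nat.le_ceil x₀
      _ ≤ (n : ℝ) := by exact_mod_cast le_trans (le_max_right _ _) hn
  have h4 := hx₀ n hxn
  have hexp : Real.exp (Real.log 2 * n) = 2 ^ n := by
    rw [mul_comm, ← Real.log_pow, Real.exp_log (by positivity)]
  rw [hexp] at h4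
  have hp2 : (0:ℝ) < 2 ^ n := by positivity
  rw [div_lt_iff₀ hp2] at h4
  have h2n : (2:ℝ) ^ (n - 1) * 2 = 2 ^ n := by
    rw [← pow_succ]; congr 1; omega
  nlinarith

theorem indistinguishability_rhoOdd (p : Polynomial ℝ) (hp : ∀ n : ℕ, 0 < p.eval (n : ℝ)) :
    ∃ N : ℕ, ∀ n, N ≤ n →
      ∀ (d : ℕ) (Φ : Matrix (Fin n → Bool) (Fin n → Bool) ℂ →ₗ[ℂ] Matrix (Fin d) (Fin d) ℂ),
        (∃ (r : ℕ) (K : Fin r → Matrix (Fin d) (Fin n → Bool) ℂ),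
          (∀ A, Φ A = ∑ j, K j * A * (K j)ᴴ) ∧ ∑ j, (K j)ᴴ * (K j) = 1) →
        ∀ (m : ℕ) (Epovm : Fin m → Matrix (Fin d) (Fin d) ℂ),
          (∀ j, (Epovm j).PosSemidef) → (∑ j, Epovm j = 1) →
          (1/2 : ℝ) * ∑ j, ‖(Φ (rhoOdd n false) * Epovm j).trace
              - (Φ (rhoOdd n true) * Epovm j).trace‖ < 1 / p.eval (n : ℝ) := by
  obtain ⟨N, hN⟩ := exists_N p
  refine ⟨N, fun n hn d Φ hΦ m Epovm hEpsd hEsum => ?_⟩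
  obtain ⟨r, K, hK, hK1⟩ := hΦ
  have hpn := hp n
  have hNn := hN n hn
  have himg_psd : ∀ (X M : Matrix (Fin n → Bool) (Fin n → Bool) ℂ), M = Xᴴ * X →
      (Φ M).PosSemidef := by
    intro X M hM
    rw [hK M]
    apply psd_sum
    intro j _
    have h : K j * M * (K j)ᴴ = (X * (K j)ᴴ)ᴴ * (X * (K j)ᴴ) := by
      rw [hM, Matrix.conjTranspose_mul, Matrix.conjTranspose_conjTranspose]
      simp [Matrix.mul_assoc]
    rw [h]
    exact Matrix.posSemidef_conjTranspose_mul_self _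
  have hA_psd : (Φ (Amat n)).PosSemidef := himg_psd (Xa n) _ (Afact n)
  have hB_psd : (Φ (Bmat n)).PosSemidef := himg_psd (Xb n) _ (Bfact n)
  have htr : ∀ M : Matrix (Fin n → Bool) (Fin n → Bool) ℂ, (Φ M).trace = M.trace := by
    intro M
    rw [hK M, Matrix.trace_sum]
    have h1 : ∀ j, (K j * M * (K j)ᴴ).trace = ((K j)ᴴ * K j * M).trace := fun j =>
      Matrix.trace_mul_cycle _ _ _
    simp only [h1]
    rw [← Matrix.trace_sum, ← Finset.sum_mul, hK1, Matrix.one_mul]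
  have hkey : ∀ j, (Φ (rhoOdd n false) * Epovm j).trace - (Φ (rhoOdd n true) * Epovm j).trace
      = ((1:ℂ)/2^(n-1)) * ((Φ (Amat n) * Epovm j).trace - (Φ (Bmat n) * Epovm j).trace) := by
    intro j
    have hdiff : Φ (rhoOdd n false) - Φ (rhoOdd n true)
        = ((1:ℂ)/2^(n-1)) • (Φ (Amat n) - Φ (Bmat n)) := by
      rw [← map_sub, delta_eq, _root_.map_smul, map_sub]
    rw [← Matrix.trace_sub, ← Matrix.sub_mul, hdiff, Matrix.smul_mul, Matrix.trace_smul,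
      smul_eq_mul, Matrix.sub_mul, Matrix.trace_sub]
  have hnorm : ‖((1:ℂ)/2^(n-1))‖ = (1:ℝ)/2^(n-1) := by simp
  have htA0 : ∀ j, 0 ≤ (Φ (Amat n) * Epovm j).trace := fun j =>
    psd_trace_mul_nonneg hA_psd (hEpsd j)
  have htB0 : ∀ j, 0 ≤ (Φ (Bmat n) * Epovm j).trace := fun j =>
    psd_trace_mul_nonneg hB_psd (hEpsd j)
  have hsumA : ∑ j, ((Φ (Amat n) * Epovm j).trace).re = 1 := by
    rw [← Complex.re_sum, ← Matrix.trace_sum, ← Matrix.mul_sum, hEsum, Matrix.mul_one,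
      htr, traceA, Complex.one_re]
  have hsumB : ∑ j, ((Φ (Bmat n) * Epovm j).trace).re = 1 := by
    rw [← Complex.re_sum, ← Matrix.trace_sum, ← Matrix.mul_sum, hEsum, Matrix.mul_one,
      htr, traceB, Complex.one_re]
  have hbd : ∀ j, ‖(Φ (rhoOdd n false) * Epovm j).trace - (Φ (rhoOdd n true) * Epovm j).trace‖
      ≤ (1/2^(n-1):ℝ) * (((Φ (Amat n) * Epovm j).trace).re + ((Φ (Bmat n) * Epovm j).trace).re) := by
    intro j
    rw [hkey j, norm_mul, hnorm]
    exact mul_le_mul_of_nonneg_left (norm_sub_le_re_add (htA0 j) (htB0 j)) (by positivity)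
  have hsum_le : ∑ j, ‖(Φ (rhoOdd n false) * Epovm j).trace
      - (Φ (rhoOdd n true) * Epovm j).trace‖ ≤ (1/2^(n-1):ℝ) * 2 := by
    calc ∑ j, ‖(Φ (rhoOdd n false) * Epovm j).trace - (Φ (rhoOdd n true) * Epovm j).trace‖
        ≤ ∑ j, (1/2^(n-1):ℝ) * (((Φ (Amat n) * Epovm j).trace).re
            + ((Φ (Bmat n) * Epovm j).trace).re) := Finset.sum_le_sum fun j _ => hbd j
      _ = (1/2^(n-1):ℝ) * (∑ j, ((Φ (Amat n) * Epovm j).trace).re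
            + ∑ j, ((Φ (Bmat n) * Epovm j).trace).re) := by
          rw [← Finset.mul_sum, Finset.sum_add_distrib]
      _ = (1/2^(n-1):ℝ) * 2 := by rw [hsumA, hsumB]; norm_num
  calc (1/2:ℝ) * ∑ j, ‖(Φ (rhoOdd n false) * Epovm j).trace
        - (Φ (rhoOdd n true) * Epovm j).trace‖
      ≤ (1/2:ℝ) * ((1/2^(n-1):ℝ) * 2) := by
        exact mul_le_mul_of_nonneg_left hsum_le (by norm_num)
    _ = (1:ℝ)/2^(n-1) := by ring
    _ < 1 / p.eval (n : ℝ) := one_div_lt_one_div_of_lt hpn hNn
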